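/- Let G = (V,E,w) be a connected weighted graph, T a maximum spanning tree of G, and C ⊆ V a set of vertices whose intersection with T forms more than one connected component of T (i.e., the subtree of T induced by C is disconnected). If C induces a connected subgraph of G, then max(Out(C)) ≥ min(MST(C)), i.e., the heaviest edge of G leaving C weighs at least as much as the lightest edge of a maximum spanning tree of G[C]. Consequently Φ(C) ≥ 1. -/

import Mathlib

open scoped Classical
noncomputable section

namespace Bal

variable {V : Type*}

/-- Total weight of the edges of a graph. -/
def totalWeight {α : Type*} [Fintype α] (H : SimpleGraph α) (w : Sym2 α → ℝ) : ℝ :=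
  ∑ e : Sym2 α, if e ∈ H.edgeSet then w e else 0

/-- `T` is a maximum spanning tree of `G` w.r.t. the weight `w`. -/
def IsMaxSpanTree {α : Type*} [Fintype α] (G T : SimpleGraph α) (w : Sym2 α → ℝ) : Prop :=
  T ≤ G ∧ T.IsTree ∧
    ∀ T' : SimpleGraph α, T' ≤ G → T'.IsTree → totalWeight T' w ≤ totalWeight T w

/-- Weight function on the induced subgraph on `C`. -/
def subWeight (w : Sym2 V → ℝ) (C : Set V) : Sym2 C → ℝ :=
  fun e => w (e.map Subtype.val)

/-- Edges of `G` with exactly one endpoint in `C`. -/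
def outEdges (G : SimpleGraph V) (C : Set V) : Set (Sym2 V) :=
  {e | e ∈ G.edgeSet ∧ ∃ a b, e = s(a, b) ∧ a ∈ C ∧ b ∉ C}

/-- Edges of `G` with both endpoints in `C`. -/
def inEdges (G : SimpleGraph V) (C : Set V) : Set (Sym2 V) :=
  {e | e ∈ G.edgeSet ∧ ∀ x ∈ e, x ∈ C}

/-- `max(Out(C))`, with the convention `sSup ∅ = 0`. -/
def maxOut (G : SimpleGraph V) (w : Sym2 V → ℝ) (C : Set V) : ℝ :=
  sSup (w '' outEdges G C)

/-- `min(E(C))`, with the convention that it is `1` for singletons. -/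
def minIn (G : SimpleGraph V) (w : Sym2 V → ℝ) (C : Set V) : ℝ :=
  if C.Subsingleton then 1 else sInf (w '' inEdges G C)

/-- `min(MST(C))` : minimum weight of an edge of a maximum spanning tree of `G[C]`,
with the convention that it is `1` for singletons. -/
def minMST [Fintype V] (G : SimpleGraph V) (w : Sym2 V → ℝ) (C : Set V) : ℝ :=
  if C.Subsingleton then 1
  else if h : ∃ T : SimpleGraph C, IsMaxSpanTree (G.induce C) T (subWeight w C) then
    sInf (subWeight w C '' h.choose.edgeSet)
  else 1

/-- Quality measure of a cluster in a graph: `max(Out(C)) / min(MST(C))`. -/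
def phi [Fintype V] (G : SimpleGraph V) (w : Sym2 V → ℝ) (C : Set V) : ℝ :=
  maxOut G w C / minMST G w C

/-- Quality measure of a cluster in a tree: `max(Out(C)) / min(E(C))`. -/
def phiT (G : SimpleGraph V) (w : Sym2 V → ℝ) (C : Set V) : ℝ :=
  maxOut G w C / minIn G w C

/-- `𝒞` is a partition of `U ⊆ V` into `G`-connected parts. -/
def IsPartitionOn (G : SimpleGraph V) (U : Set V) (𝒞 : Set (Set V)) : Prop :=
  (∀ C ∈ 𝒞, C.Nonempty ∧ C ⊆ U ∧ (G.induce C).Connected) ∧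
  (∀ C ∈ 𝒞, ∀ C' ∈ 𝒞, C ≠ C' → Disjoint C C') ∧ ⋃₀ 𝒞 = U

/-- A `k`-clustering of a graph `G` on vertex set `V`. -/
def IsClustering (G : SimpleGraph V) (𝒞 : Set (Set V)) (k : ℕ) : Prop :=
  IsPartitionOn G Set.univ 𝒞 ∧ 𝒞.ncard = k

/-- Evaluation of a clustering of a graph (min-max quality measure, MST-based). -/
def eval [Fintype V] (G : SimpleGraph V) (w : Sym2 V → ℝ) (𝒞 : Set (Set V)) : ℝ :=
  sSup (phi G w '' 𝒞)

/-- Evaluation of a clustering of a tree. -/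
def evalT (G : SimpleGraph V) (w : Sym2 V → ℝ) (𝒞 : Set (Set V)) : ℝ :=
  sSup (phiT G w '' 𝒞)

/-- `𝒞` is an optimal `k`-clustering of `G`. -/
def IsOptimal [Fintype V] (G : SimpleGraph V) (w : Sym2 V → ℝ) (k : ℕ) (𝒞 : Set (Set V)) : Prop :=
  IsClustering G 𝒞 k ∧ ∀ 𝒟, IsClustering G 𝒟 k → eval G w 𝒞 ≤ eval G w 𝒟

/-- All edge weights lie in the open interval `(0,1)`. -/
def weightsOK (G : SimpleGraph V) (w : Sym2 V → ℝ) : Prop :=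
  ∀ e ∈ G.edgeSet, 0 < w e ∧ w e < 1

/-- The set of connected components (as vertex sets) of a graph. -/
def components (G : SimpleGraph V) : Set (Set V) :=
  {C | ∃ x : V, C = {y | G.Reachable x y}}

section Helpers
open SimpleGraph
variable {α : Type*}

lemma reachable_of_walk_imp {G H : SimpleGraph α} {u v : α} (p : G.Walk u v)
    (h : ∀ a b, G.Adj a b → H.Reachable a b) : H.Reachable u v := by
  induction p with
  | nil => exact Reachable.refl _
  | cons h' _ ih => exact (h _ _ h').trans ih

lemma delete_reachable {G : SimpleGraph α} {x y : α}
    (hxy : (G \ fromEdgeSet {s(x,y)}).Reachable x y) {u v : α} (huv : G.Reachable u v) :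
    (G \ fromEdgeSet {s(x,y)}).Reachable u v := by
  obtain ⟨p⟩ := huv
  refine reachable_of_walk_imp p fun a b hab => ?_
  by_cases h : s(a,b) = s(x,y)
  · rw [Sym2.eq_iff] at h
    rcases h with ⟨rfl, rfl⟩ | ⟨rfl, rfl⟩
    · exact hxy
    · exact hxy.symm
  · exact Adj.reachable (by simp [hab, h, hab.ne])

lemma deleted_connected {G : SimpleGraph α} {x y : α} (hG : G.Connected)
    (hadj : G.Adj x y) (hnb : ¬ G.IsBridge s(x,y)) : (G \ fromEdgeSet {s(x,y)}).Connected := by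
  rw [isBridge_iff] at hnb
  haveI := hG.nonempty
  exact ⟨fun u v => delete_reachable (not_not.mp hnb) (hG u v)⟩


lemma ncard_edgeSet_eq [Fintype α] (G : SimpleGraph α) :
    G.edgeSet.ncard = G.edgeFinset.card := by
  rw [← coe_edgeFinset, Set.ncard_coe_finset]

lemma exists_spanning_tree_aux [Fintype α] :
    ∀ n (G : SimpleGraph α), G.edgeSet.ncard ≤ n → G.Connected → ∃ T ≤ G, T.IsTree := by
  intro n
  induction n with
  | zero =>
    intro G hn hG
    have hbot : G = ⊥ := by
      rw [← edgeSet_eq_empty, ← Set.ncard_eq_zero (Set.toFinite _)]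
      omega
    refine ⟨G, le_refl _, hG, ?_⟩
    intro v c hc
    cases c with
    | nil => simp [Walk.isCycle_def] at hc
    | cons h q => rw [hbot] at h; exact h.elim
  | succ n ih =>
    intro G hn hG
    by_cases hac : G.IsAcyclic
    · exact ⟨G, le_refl _, hG, hac⟩
    · rw [isAcyclic_iff_forall_adj_isBridge] at hac
      push_neg at hac
      obtain ⟨x, y, hadj, hnb⟩ := hac
      have hconn' := deleted_connected hG hadj hnb
      have hedge : (G \ fromEdgeSet {s(x,y)}).edgeSet = G.edgeSet \ {s(x,y)} := by
        rw [edgeSet_sdiff, edgeSet_fromEdgeSet]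
        rw [Set.diff_diff_right]
        have : G.edgeSet ∩ {e : Sym2 α | e.IsDiag} = ∅ := by
          ext e
          simp only [Set.mem_inter_iff, Set.mem_empty_iff_false, iff_false, not_and]
          exact fun he => G.not_isDiag_of_mem_edgeSet he
        rw [show G.edgeSet ∩ Sym2.diagSet = ∅ from this, Set.union_empty]
      have hcard : (G \ fromEdgeSet {s(x,y)}).edgeSet.ncard ≤ n := by
        rw [hedge]
        have hmem : s(x,y) ∈ G.edgeSet := hadj
        have := Set.ncard_diff_singleton_lt_of_mem hmem (Set.toFinite _)
        omega
      obtain ⟨T, hle, hT⟩ := ih _ hcard hconn'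
      exact ⟨T, hle.trans sdiff_le, hT⟩

lemma exists_spanning_tree [Fintype α] (G : SimpleGraph α) (hG : G.Connected) :
    ∃ T ≤ G, T.IsTree :=
  exists_spanning_tree_aux G.edgeSet.ncard G le_rfl hG

lemma connected_card_le [Fintype α] (G : SimpleGraph α) (hG : G.Connected) :
    Fintype.card α ≤ G.edgeSet.ncard + 1 := by
  obtain ⟨T, hle, hT⟩ := exists_spanning_tree G hG
  have := hT.card_edgeFinset
  rw [← ncard_edgeSet_eq] at this
  have hmono : T.edgeSet.ncard ≤ G.edgeSet.ncard :=
    Set.ncard_le_ncard (edgeSet_mono hle) (Set.toFinite _)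
  omega

lemma isTree_of_connected_of_card [Fintype α] (G : SimpleGraph α) (hG : G.Connected)
    (hcard : G.edgeSet.ncard + 1 = Fintype.card α) : G.IsTree := by
  refine ⟨hG, ?_⟩
  by_contra hac
  rw [isAcyclic_iff_forall_adj_isBridge] at hac
  push_neg at hac
  obtain ⟨x, y, hadj, hnb⟩ := hac
  have hconn' := deleted_connected hG hadj hnb
  have hedge : (G \ fromEdgeSet {s(x,y)}).edgeSet = G.edgeSet \ {s(x,y)} := by
    rw [edgeSet_sdiff, edgeSet_fromEdgeSet, Set.diff_diff_right]
    have : G.edgeSet ∩ {e : Sym2 α | e.IsDiag} = ∅ := by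
      ext e
      simp only [Set.mem_inter_iff, Set.mem_empty_iff_false, iff_false, not_and]
      exact fun he => G.not_isDiag_of_mem_edgeSet he
    rw [show G.edgeSet ∩ Sym2.diagSet = ∅ from this, Set.union_empty]
  have h1 := connected_card_le _ hconn'
  rw [hedge] at h1
  have hmem : s(x,y) ∈ G.edgeSet := hadj
  have h2 := Set.ncard_diff_singleton_lt_of_mem hmem (Set.toFinite _)
  omega

lemma exists_maxSpanTree [Fintype α] (G : SimpleGraph α) (hG : G.Connected) (w : Sym2 α → ℝ) :
    ∃ T, IsMaxSpanTree G T w := by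
  haveI : Finite (SimpleGraph α) :=
    Finite.of_injective (fun H => H.Adj) fun a b h => SimpleGraph.ext h
  have hfin : {T : SimpleGraph α | T ≤ G ∧ T.IsTree}.Finite := Set.toFinite _
  have hne : {T : SimpleGraph α | T ≤ G ∧ T.IsTree}.Nonempty := by
    obtain ⟨T, hle, hT⟩ := exists_spanning_tree G hG
    exact ⟨T, hle, hT⟩
  obtain ⟨T, hT, hmax⟩ := Set.exists_max_image _ (fun T => totalWeight T w) hfin hne
  refine ⟨T, hT.1, hT.2, fun T' hle htree => ?_⟩
  rcases le_or_gt (totalWeight T' w) (totalWeight T w) with h | h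
  · exact h
  · exact hmax T' ⟨hle, htree⟩

lemma exchange [Fintype α] {G T : SimpleGraph α} {w : Sym2 α → ℝ} (hT : IsMaxSpanTree G T w)
    {a b x y : α} (hab : G.Adj a b) (habT : ¬ T.Adj a b)
    (p : T.Walk a b) (hp : p.IsPath) (hf : s(x,y) ∈ p.edges) :
    w s(a,b) ≤ w s(x,y) := by
  obtain ⟨hTG, hTtree, hTmax⟩ := hT
  have hxyT : s(x,y) ∈ T.edgeSet := p.edges_subset_edgeSet hf
  have habE : s(a,b) ∉ T.edgeSet := habT
  have hne : s(a,b) ≠ s(x,y) := fun h => habE (h ▸ hxyT)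
  set K := T ⊔ fromEdgeSet {s(a,b)} with hK
  set p' : K.Walk a b := p.mapLe le_sup_left with hp'def
  have hp' : p'.IsPath := hp.mapLe _
  have hedges' : p'.edges = p.edges := by
    have hid : ⇑(Hom.ofLE (le_sup_left : T ≤ K)) = id := rfl
    simp [hp'def, Walk.mapLe, Walk.edges_map, hid, Sym2.map_id]
  have hKba : K.Adj b a := by
    rw [hK, sup_adj, fromEdgeSet_adj]
    exact Or.inr ⟨by rw [Set.mem_singleton_iff, Sym2.eq_swap], hab.ne'⟩
  have hcyc : (Walk.cons hKba p').IsCycle := by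
    rw [Walk.cons_isCycle_iff]
    refine ⟨hp', fun hmem => ?_⟩
    rw [hedges', Sym2.eq_swap] at hmem
    exact habE (p.edges_subset_edgeSet hmem)
  have hfc : s(x,y) ∈ (Walk.cons hKba p').edges := by
    rw [Walk.edges_cons]
    exact List.mem_cons_of_mem _ (hedges' ▸ hf)
  have hreach : K.Adj x y ∧ (K \ fromEdgeSet {s(x,y)}).Reachable x y :=
    adj_and_reachable_delete_edges_iff_exists_cycle.mpr ⟨b, _, hcyc, hfc⟩
  set T2 := K \ fromEdgeSet {s(x,y)} with hT2
  have hKconn : K.Connected := hTtree.isConnected.mono le_sup_left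
  have hT2conn : T2.Connected := by
    haveI := hKconn.nonempty
    exact ⟨fun u v => delete_reachable hreach.2 (hKconn u v)⟩
  have hdiag : ∀ (u v : α), u ≠ v → ({s(u,v)} : Set (Sym2 α)) \ {e | e.IsDiag} = {s(u,v)} := by
    intro u v huv
    ext e
    simp only [Set.mem_diff, Set.mem_singleton_iff, Set.mem_setOf_eq, and_iff_left_iff_imp]
    rintro rfl
    simp [huv]
  have hKedges : K.edgeSet = T.edgeSet ∪ {s(a,b)} := by
    rw [hK, edgeSet_sup, edgeSet_fromEdgeSet, show ({s(a,b)} : Set (Sym2 α)) \ Sym2.diagSet = {s(a,b)} from hdiag a b hab.ne]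
  have hxyne : x ≠ y := (T.ne_of_adj hxyT)
  have hT2edges : T2.edgeSet = (T.edgeSet ∪ {s(a,b)}) \ {s(x,y)} := by
    rw [hT2, edgeSet_sdiff, edgeSet_fromEdgeSet, show ({s(x,y)} : Set (Sym2 α)) \ Sym2.diagSet = {s(x,y)} from hdiag x y hxyne, hKedges]
  have hcard : T2.edgeSet.ncard = T.edgeSet.ncard := by
    rw [hT2edges, Set.union_diff_distrib]
    have h1 : ({s(a,b)} : Set (Sym2 α)) \ {s(x,y)} = {s(a,b)} := by
      refine Set.diff_singleton_eq_self ?_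
      simp [Ne.symm hne]
    rw [h1, Set.ncard_union_eq (Set.disjoint_singleton_right.mpr fun h => habE h.1)
      ((Set.toFinite _).diff) (Set.toFinite _)]
    rw [Set.ncard_singleton]
    have := Set.ncard_diff_singleton_add_one hxyT (Set.toFinite _)
    omega
  have hT2tree : T2.IsTree := by
    refine isTree_of_connected_of_card _ hT2conn ?_
    rw [hcard, ncard_edgeSet_eq]
    exact hTtree.card_edgeFinset
  have hT2le : T2 ≤ G := by
    refine sdiff_le.trans (sup_le hTG ?_)
    intro u v huv
    rw [fromEdgeSet_adj] at huv
    obtain ⟨h1, h2⟩ := huv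
    rw [Set.mem_singleton_iff, Sym2.eq_iff] at h1
    rcases h1 with ⟨rfl, rfl⟩ | ⟨rfl, rfl⟩
    · exact hab
    · exact hab.symm
  have conv1 : ∀ (H : SimpleGraph α), totalWeight H w = ∑ g : Sym2 α, H.edgeSet.indicator w g := by
    intro H
    unfold totalWeight
    exact Finset.sum_congr rfl fun g _ => (Set.indicator_apply _ _ _).symm
  have hw2 : totalWeight T2 w = totalWeight T w + w s(a,b) - w s(x,y) := by
    rw [conv1 T2, conv1 T]
    have key : ∀ g : Sym2 α, T2.edgeSet.indicator w g = T.edgeSet.indicator w g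
        + (if g = s(a,b) then w g else 0) - (if g = s(x,y) then w g else 0) := by
      intro g
      by_cases h1 : g = s(a,b)
      · subst h1
        have m1 : s(a,b) ∈ T2.edgeSet := by
          rw [hT2edges]; exact ⟨Or.inr rfl, hne⟩
        rw [Set.indicator_of_mem m1 w, Set.indicator_of_notMem habE w, if_pos rfl, if_neg hne]
        ring
      · by_cases h2 : g = s(x,y)
        · subst h2
          have m2 : s(x,y) ∉ T2.edgeSet := by
            rw [hT2edges]; exact fun h => h.2 rfl
          rw [Set.indicator_of_notMem m2 w, Set.indicator_of_mem hxyT w, if_neg h1, if_pos rfl]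
          ring
        · rw [if_neg h1, if_neg h2]
          by_cases hTg : g ∈ T.edgeSet
          · have m3 : g ∈ T2.edgeSet := by
              rw [hT2edges]; exact ⟨Or.inl hTg, h2⟩
            rw [Set.indicator_of_mem m3 w, Set.indicator_of_mem hTg w]
            ring
          · have m4 : g ∉ T2.edgeSet := by
              rw [hT2edges]; exact fun h => h.1.elim hTg h1
            rw [Set.indicator_of_notMem m4 w, Set.indicator_of_notMem hTg w]
            ring
    rw [show (∑ g : Sym2 α, T2.edgeSet.indicator w g) = _ from Finset.sum_congr rfl
      fun g _ => key g]
    rw [Finset.sum_sub_distrib, Finset.sum_add_distrib]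
    simp [Finset.sum_ite_eq']
  have hle := hTmax T2 hT2le hT2tree
  rw [hw2] at hle
  linarith

lemma exists_exit {G : SimpleGraph α} {C : Set α} {u v : α} (q : G.Walk u v) :
    ∀ (_ : u ∈ C) (_ : v ∉ C), ∃ x y, s(x,y) ∈ q.edges ∧ x ∈ C ∧ y ∉ C := by
  induction q with
  | nil => exact fun hu hv => absurd hu hv
  | @cons a b c h q ih =>
    intro hu hv
    by_cases hb : b ∈ C
    · obtain ⟨x, y, hxy, hx, hy⟩ := ih hb hv
      exact ⟨x, y, List.mem_cons_of_mem _ hxy, hx, hy⟩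
    · exact ⟨a, b, List.mem_cons_self, hu, hb⟩

lemma induce_reachable_of_walk {G : SimpleGraph α} {C : Set α} {u v : α} (p : G.Walk u v) :
    ∀ (_ : ∀ z ∈ p.support, z ∈ C) (hu : u ∈ C) (hv : v ∈ C),
      (G.induce C).Reachable ⟨u, hu⟩ ⟨v, hv⟩ := by
  induction p with
  | nil => exact fun _ _ _ => Reachable.refl _
  | @cons a b c h q ih =>
    intro hs hu hv
    have hb : b ∈ C := hs b (by simp)
    exact (Adj.reachable (by exact h : (G.induce C).Adj ⟨a, hu⟩ ⟨b, hb⟩)).trans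
      (ih (fun z hz => hs z (by simp [hz])) hb hv)

end Helpers

/-- a cluster disconnected in a maximum spanning tree satisfies
`min(MST(C)) ≤ max(Out(C))`, hence `Φ(C) ≥ 1`. -/
theorem statement7 {V : Type*} [Fintype V] (G : SimpleGraph V) (w : Sym2 V → ℝ)
    (hconn : G.Connected) (hw : ∀ e ∈ G.edgeSet, 0 < w e)
    (T : SimpleGraph V) (hT : IsMaxSpanTree G T w)
    (C : Set V) (hCnt : C.Nontrivial) (hCG : (G.induce C).Connected)
    (hCT : ¬ (T.induce C).Connected) :
    minMST G w C ≤ maxOut G w C ∧ 1 ≤ phi G w C := by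
  classical
  have hCne : C.Nonempty := hCnt.nonempty
  have hns : ¬ C.Subsingleton := hCnt.not_subsingleton
  have hrew : ∃ (T' : SimpleGraph C), IsMaxSpanTree (G.induce C) T' (subWeight w C) ∧
      minMST G w C = sInf (subWeight w C '' T'.edgeSet) := by
    unfold minMST
    rw [if_neg hns]
    split
    next h => exact ⟨h.choose, h.choose_spec, rfl⟩
    next h => exact absurd (exists_maxSpanTree _ hCG _) h
  obtain ⟨T', hT'spec, hmineq⟩ := hrew
  obtain ⟨hT'le, hT'tree, hT'max⟩ := hT'spec
  -- find an edge of T' joining two components of T.induce C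
  have hcross : ∃ a b : C, T'.Adj a b ∧ ¬ (T.induce C).Reachable a b := by
    by_contra hcon
    push_neg at hcon
    apply hCT
    haveI : Nonempty C := hCne.to_subtype
    refine ⟨fun u v => ?_⟩
    obtain ⟨p⟩ := hT'tree.isConnected u v
    exact reachable_of_walk_imp p fun a b hab => hcon a b hab
  obtain ⟨a, b, hadj, hreach⟩ := hcross
  have hGab : G.Adj ↑a ↑b := hT'le hadj
  have hTab : ¬ T.Adj ↑a ↑b := fun h =>
    hreach (SimpleGraph.Adj.reachable (by exact h : (T.induce C).Adj a b))
  obtain ⟨p0⟩ := hT.2.1.isConnected ↑a ↑b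
  set p : T.Walk ↑a ↑b := (p0.toPath : T.Path ↑a ↑b).val
  have hp : p.IsPath := (p0.toPath).2
  have hz : ∃ z ∈ p.support, z ∉ C := by
    by_contra h
    push_neg at h
    have := induce_reachable_of_walk p h a.2 b.2
    exact hreach (by simpa using this)
  obtain ⟨z, hzs, hzC⟩ := hz
  obtain ⟨x, y, hxyq, hxC, hyC⟩ := exists_exit (p.takeUntil z hzs) a.2 hzC
  have hxyp : s(x,y) ∈ p.edges := SimpleGraph.Walk.edges_takeUntil_subset _ hzs hxyq
  have hkey : w s(↑a, ↑b) ≤ w s(x,y) := exchange hT hGab hTab p hp hxyp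
  have hfT : s(x,y) ∈ T.edgeSet := p.edges_subset_edgeSet hxyp
  have hfG : s(x,y) ∈ G.edgeSet := SimpleGraph.edgeSet_mono hT.1 hfT
  have hfOut : s(x,y) ∈ outEdges G C := ⟨hfG, x, y, rfl, hxC, hyC⟩
  have hmaxout : w s(x,y) ≤ maxOut G w C :=
    le_csSup ((Set.toFinite (outEdges G C)).image w).bddAbove ⟨_, hfOut, rfl⟩
  have heAB : s(a, b) ∈ T'.edgeSet := hadj
  have hsub : subWeight w C s(a,b) = w s(↑a, ↑b) := by
    simp [subWeight, Sym2.map_pair_eq]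
  have hmemim : w s(↑a,↑b) ∈ subWeight w C '' T'.edgeSet := ⟨s(a,b), heAB, hsub⟩
  have hmin : minMST G w C ≤ w s(↑a, ↑b) := by
    rw [hmineq]
    exact csInf_le (Set.toFinite _).bddBelow hmemim
  have hpart1 : minMST G w C ≤ maxOut G w C := hmin.trans (hkey.trans hmaxout)
  refine ⟨hpart1, ?_⟩
  have hminpos : 0 < minMST G w C := by
    rw [hmineq]
    have hne' : (subWeight w C '' T'.edgeSet).Nonempty := ⟨_, hmemim⟩
    obtain ⟨g, hg, hgeq⟩ := hne'.csInf_mem (Set.toFinite _)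
    rw [← hgeq]
    induction g using Sym2.ind with
    | _ u' v' =>
      have hadj' : T'.Adj u' v' := hg
      have : G.Adj ↑u' ↑v' := hT'le hadj'
      have : s(↑u', ↑v') ∈ G.edgeSet := this
      have := hw _ this
      simpa [subWeight, Sym2.map_pair_eq] using this
  rw [phi, le_div_iff₀ hminpos, one_mul]
  exact hpart1

end Bal
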